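/- Let X_λ = √λ X + √(1-λ) σ Z with X ∼ π, Z ∼ N(0, I_d) independent, σ > 0, and let μ̃_λ denote the law of X_λ for λ ∈ (0,1). Then the metric derivative of the curve λ ↦ μ̃_λ in Wasserstein-2 satisfies |μ̃'|_λ² = lim_{δ→0} W_2²(μ̃_λ, μ̃_{λ+δ})/δ² ≤ E_π[‖X‖²]/(4λ) + σ² d/(4(1-λ)). -/

import Mathlib

open MeasureTheory Real ENNReal ProbabilityTheory Filter

noncomputable section

/-- The standard Gaussian N(0, I_d) on d-dimensional Euclidean space. -/
def stdGaussianE (d : ℕ) : Measure (EuclideanSpace ℝ (Fin d)) :=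
  (Measure.pi fun _ : Fin d => ProbabilityTheory.gaussianReal 0 1).map
    (EuclideanSpace.equiv (Fin d) ℝ).symm

/-- Squared Wasserstein-2 distance (as an extended real), defined as the
infimum of the quadratic transport cost over all couplings. -/
def W2sq {d : ℕ} (μ ν : Measure (EuclideanSpace ℝ (Fin d))) : ℝ≥0∞ :=
  ⨅ (γ : Measure (EuclideanSpace ℝ (Fin d) × EuclideanSpace ℝ (Fin d)))
    (_ : γ.map Prod.fst = μ ∧ γ.map Prod.snd = ν),
      ∫⁻ q, (‖q.1 - q.2‖₊ : ℝ≥0∞) ^ 2 ∂γ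

section GaussAux

lemma my_pdf_eq (x : ℝ) : gaussianPDFReal 0 1 x = (Real.sqrt (2*π))⁻¹ * Real.exp (-(1/2) * x^2) := by
  rw [gaussianPDFReal]
  push_cast
  rw [show ((2:ℝ)*π*1) = 2*π by ring]
  congr 1
  ring

lemma my_gr : gaussianReal 0 1 = (volume : Measure ℝ).withDensity
    (fun x => ((gaussianPDFReal 0 1 x).toNNReal : ℝ≥0∞)) := by
  rw [gaussianReal_of_var_ne_zero 0 one_ne_zero]
  rfl

lemma my_integral_gauss (g : ℝ → ℝ) :
    ∫ x, g x ∂(gaussianReal 0 1) = ∫ x, gaussianPDFReal 0 1 x * g x := by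
  rw [my_gr, integral_withDensity_eq_integral_smul
    ((measurable_gaussianPDFReal 0 1).real_toNNReal) g]
  congr 1; ext x
  simp [NNReal.smul_def, Real.coe_toNNReal _ (gaussianPDFReal_nonneg 0 1 x)]

lemma my_integrable_gauss_iff (g : ℝ → ℝ) :
    Integrable g (gaussianReal 0 1) ↔
      Integrable (fun x => gaussianPDFReal 0 1 x * g x) volume := by
  rw [my_gr, integrable_withDensity_iff_integrable_smul
    ((measurable_gaussianPDFReal 0 1).real_toNNReal)]
  constructor <;> intro h <;> refine h.congr (Filter.Eventually.of_forall fun x => ?_) <;>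
    simp [NNReal.smul_def, Real.coe_toNNReal _ (gaussianPDFReal_nonneg 0 1 x)]

lemma my_int_exp : ∫ x : ℝ, Real.exp (-(1/2) * x^2) = Real.sqrt (2*π) := by
  have h := integral_gaussian (1/2)
  rw [show (π / (1/2) : ℝ) = 2*π by ring] at h
  simp_rw [neg_mul] at h ⊢
  convert h using 1

lemma my_integrable_exp : Integrable (fun x : ℝ => Real.exp (-(1/2) * x^2)) volume :=
  integrable_exp_neg_mul_sq (by norm_num)

lemma my_integrable_sq_exp : Integrable (fun x : ℝ => x^2 * Real.exp (-(1/2) * x^2)) volume := by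
  have := integrable_rpow_mul_exp_neg_mul_sq (b := 1/2) (by norm_num) (s := 2) (by norm_num)
  refine this.congr (Filter.Eventually.of_forall fun x => ?_)
  norm_num [Real.rpow_natCast]

lemma my_integrable_id_exp : Integrable (fun x : ℝ => x * Real.exp (-(1/2) * x^2)) volume :=
  integrable_mul_exp_neg_mul_sq (by norm_num)

lemma my_int_sq_exp : ∫ x : ℝ, x^2 * Real.exp (-(1/2) * x^2) = Real.sqrt (2*π) := by
  have hderiv : ∀ x : ℝ, HasDerivAt (fun y : ℝ => y * Real.exp (-(1/2) * y^2))
      (Real.exp (-(1/2) * x^2) - x^2 * Real.exp (-(1/2) * x^2)) x := by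
    intro x
    have h1 : HasDerivAt (fun y : ℝ => -(1/2) * y^2) (-(1/2) * (2*x)) x := by
      simpa using ((hasDerivAt_pow 2 x).const_mul (-(1/2:ℝ)))
    have h2 := (h1.exp)
    have h3 := (hasDerivAt_id x).fun_mul h2
    refine h3.congr_deriv ?_
    simp only [id_eq]
    ring
  have h0 := integral_eq_zero_of_hasDerivAt_of_integrable hderiv
    (my_integrable_exp.sub my_integrable_sq_exp) my_integrable_id_exp
  rw [integral_sub my_integrable_exp my_integrable_sq_exp] at h0
  rw [← my_int_exp]
  linarith

lemma my_int_odd : ∫ x : ℝ, x * Real.exp (-(1/2) * x^2) = 0 := by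
  have h := MeasureTheory.integral_neg_eq_self (fun x : ℝ => x * Real.exp (-(1/2) * x^2)) volume
  have h' : (∫ x : ℝ, -(x * Real.exp (-(1/2) * x^2))) = ∫ x : ℝ, x * Real.exp (-(1/2) * x^2) := by
    rw [← h]
    congr 1; ext x
    rw [show -x * Real.exp (-(1/2) * (-x)^2) = -(x * Real.exp (-(1/2) * (-x)^2)) by ring]
    congr 2
    ring
  rw [integral_neg] at h'
  have : (∫ x : ℝ, x * Real.exp (-(1/2) * x^2)) = 0 := by linarith
  exact this

lemma gauss_int_sq : ∫ x, x^2 ∂(gaussianReal 0 1) = 1 := by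
  rw [my_integral_gauss]
  have : ∀ x : ℝ, gaussianPDFReal 0 1 x * x^2
      = (Real.sqrt (2*π))⁻¹ * (x^2 * Real.exp (-(1/2) * x^2)) := by
    intro x; rw [my_pdf_eq]; ring
  simp_rw [this]
  rw [integral_const_mul, my_int_sq_exp]
  rw [inv_mul_cancel₀]
  positivity

lemma gauss_int_id : ∫ x, x ∂(gaussianReal 0 1) = 0 := by
  rw [my_integral_gauss]
  have : ∀ x : ℝ, gaussianPDFReal 0 1 x * x
      = (Real.sqrt (2*π))⁻¹ * (x * Real.exp (-(1/2) * x^2)) := by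
    intro x; rw [my_pdf_eq]; ring
  simp_rw [this]
  rw [integral_const_mul, my_int_odd, mul_zero]

lemma gauss_integrable_sq : Integrable (fun x : ℝ => x^2) (gaussianReal 0 1) := by
  rw [my_integrable_gauss_iff]
  have : ∀ x : ℝ, gaussianPDFReal 0 1 x * x^2
      = (Real.sqrt (2*π))⁻¹ * (x^2 * Real.exp (-(1/2) * x^2)) := by
    intro x; rw [my_pdf_eq]; ring
  simp_rw [this]
  exact my_integrable_sq_exp.const_mul _

lemma gauss_integrable_id : Integrable (fun x : ℝ => x) (gaussianReal 0 1) := by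
  rw [my_integrable_gauss_iff]
  have : ∀ x : ℝ, gaussianPDFReal 0 1 x * x
      = (Real.sqrt (2*π))⁻¹ * (x * Real.exp (-(1/2) * x^2)) := by
    intro x; rw [my_pdf_eq]; ring
  simp_rw [this]
  exact my_integrable_id_exp.const_mul _

end GaussAux

lemma my_pi_map_eval {ι : Type*} [Fintype ι] [DecidableEq ι] {α : ι → Type*}
    [∀ i, MeasurableSpace (α i)]
    (μ : ∀ i, Measure (α i)) [∀ i, IsProbabilityMeasure (μ i)] (i : ι) :
    (Measure.pi μ).map (fun x => x i) = μ i := by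
  ext s hs
  rw [Measure.map_apply (measurable_pi_apply i) hs]
  have he : (fun x : ∀ j, α j => x i) ⁻¹' s
      = Set.pi Set.univ (Function.update (fun j => (Set.univ : Set (α j))) i s) := by
    ext x
    simp only [Set.mem_preimage, Set.mem_univ_pi]
    constructor
    · intro hx j
      rcases eq_or_ne j i with rfl | hj
      · simpa using hx
      · simp [Function.update_of_ne hj]
    · intro hx
      have := hx i
      simpa using this
  rw [he, Measure.pi_pi]
  rw [Finset.prod_eq_single i]
  · simp
  · intro j _ hj
    simp [Function.update_of_ne hj]
  · simp

lemma stdGaussianE_map_eval (d : ℕ) (i : Fin d) :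
    (stdGaussianE d).map (fun x => x i) = gaussianReal 0 1 := by
  rw [stdGaussianE]
  have h := Measure.map_map (μ := Measure.pi fun _ : Fin d => gaussianReal 0 1)
    (g := fun x : EuclideanSpace ℝ (Fin d) => x i)
    (f := ⇑(EuclideanSpace.equiv (Fin d) ℝ).symm)
    ((measurable_pi_apply i).comp (WithLp.measurable_ofLp _ _))
    (EuclideanSpace.equiv (Fin d) ℝ).symm.continuous.measurable
  rw [h, show ((fun x : EuclideanSpace ℝ (Fin d) => x i) ∘ ⇑(EuclideanSpace.equiv (Fin d) ℝ).symm)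
      = fun x : Fin d → ℝ => x i from rfl, my_pi_map_eval]

lemma my_inner_eq {d : ℕ} (x y : EuclideanSpace ℝ (Fin d)) :
    (inner ℝ x y : ℝ) = ∑ i, x i * y i := by
  rw [PiLp.inner_apply]
  simp [RCLike.inner_apply, conj_trivial, mul_comm]

lemma my_norm_sq {d : ℕ} (x : EuclideanSpace ℝ (Fin d)) :
    ‖x‖^2 = ∑ i, (x i)^2 := by
  rw [← real_inner_self_eq_norm_sq, my_inner_eq]
  congr 1; ext i; ring

/-- **Metric-derivative bound along the diffusion path.** -/
theorem metric_derivative_bound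
    (d : ℕ) (σ : ℝ) (hσ : 0 < σ) (l : ℝ) (hl : l ∈ Set.Ioo (0 : ℝ) 1)
    {Ω : Type*} [MeasureSpace Ω] (P : Measure Ω) [IsProbabilityMeasure P]
    (X Z : Ω → EuclideanSpace ℝ (Fin d))
    (hX : Measurable X) (hZ : Measurable Z)
    (hindep : ProbabilityTheory.IndepFun X Z P)
    (πm : Measure (EuclideanSpace ℝ (Fin d))) [IsProbabilityMeasure πm]
    (hlawX : P.map X = πm)
    (hlawZ : P.map Z = stdGaussianE d)
    (M2 : ℝ) (hM2int : Integrable (fun x => ‖x‖ ^ 2) πm)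
    (hM2 : M2 = ∫ x, ‖x‖ ^ 2 ∂πm)
    (pathLaw : ℝ → Measure (EuclideanSpace ℝ (Fin d)))
    (hpath : ∀ s : ℝ, pathLaw s =
      P.map (fun ω => Real.sqrt s • X ω + (Real.sqrt (1 - s) * σ) • Z ω)) :
    Filter.limsup
        (fun δ : ℝ => W2sq (pathLaw l) (pathLaw (l + δ)) / ENNReal.ofReal (δ ^ 2))
        (nhdsWithin 0 {(0 : ℝ)}ᶜ) ≤
      ENNReal.ofReal (M2 / (4 * l) + σ ^ 2 * d / (4 * (1 - l))) := by
  obtain ⟨hl0, hl1⟩ := hl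
  -- coordinate laws
  have hZci : ∀ i : Fin d, P.map (fun ω => Z ω i) = gaussianReal 0 1 := by
    intro i
    have h := Measure.map_map (μ := P)
      (g := fun x : EuclideanSpace ℝ (Fin d) => x i) (f := Z)
      ((measurable_pi_apply i).comp (WithLp.measurable_ofLp _ _)) hZ
    rw [hlawZ] at h
    rw [show (fun ω => Z ω i) = ((fun x : EuclideanSpace ℝ (Fin d) => x i) ∘ Z) from rfl,
      ← h, stdGaussianE_map_eval]
  have hZmi : ∀ i : Fin d, Measurable (fun ω => Z ω i) :=
    fun i => (measurable_pi_apply i).comp ((WithLp.measurable_ofLp _ _).comp hZ)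
  have hXmi : ∀ i : Fin d, Measurable (fun ω => X ω i) :=
    fun i => (measurable_pi_apply i).comp ((WithLp.measurable_ofLp _ _).comp hX)
  -- moments of Z coordinates
  have intZi2 : ∀ i : Fin d, Integrable (fun ω => (Z ω i)^2) P := by
    intro i
    have h : Integrable (fun x : ℝ => x^2) (P.map (fun ω => Z ω i)) := by
      rw [hZci i]; exact gauss_integrable_sq
    exact (integrable_map_measure (measurable_id.pow_const 2).aestronglyMeasurable
      (hZmi i).aemeasurable).mp h
  have intZi : ∀ i : Fin d, Integrable (fun ω => Z ω i) P := by
    intro i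
    have h : Integrable (fun x : ℝ => x) (P.map (fun ω => Z ω i)) := by
      rw [hZci i]; exact gauss_integrable_id
    exact (integrable_map_measure measurable_id.aestronglyMeasurable
      (hZmi i).aemeasurable).mp h
  have EZi2 : ∀ i : Fin d, ∫ ω, (Z ω i)^2 ∂P = 1 := by
    intro i
    have h := integral_map (μ := P) (φ := fun ω => Z ω i) (hZmi i).aemeasurable
      (f := fun x : ℝ => x^2) (measurable_id.pow_const 2).aestronglyMeasurable
    rw [hZci i, gauss_int_sq] at h
    exact h.symm
  have EZi : ∀ i : Fin d, ∫ ω, Z ω i ∂P = 0 := by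
    intro i
    have h := integral_map (μ := P) (φ := fun ω => Z ω i) (hZmi i).aemeasurable
      (f := fun x : ℝ => x) measurable_id.aestronglyMeasurable
    rw [hZci i, gauss_int_id] at h
    exact h.symm
  -- second moment of Z
  have hZ2 : Integrable (fun ω => ‖Z ω‖^2) P := by
    have : ∀ ω, ‖Z ω‖^2 = ∑ i, (Z ω i)^2 := fun ω => my_norm_sq (Z ω)
    simp_rw [this]
    exact integrable_finset_sum _ (fun i _ => intZi2 i)
  have EZ2 : ∫ ω, ‖Z ω‖^2 ∂P = d := by
    have : ∀ ω, ‖Z ω‖^2 = ∑ i, (Z ω i)^2 := fun ω => my_norm_sq (Z ω)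
    simp_rw [this]
    rw [integral_finset_sum _ (fun i _ => intZi2 i)]
    simp [EZi2]
  -- second moment of X
  have hX2 : Integrable (fun ω => ‖X ω‖^2) P := by
    have h : Integrable (fun x : EuclideanSpace ℝ (Fin d) => ‖x‖^2) (P.map X) := by
      rw [hlawX]; exact hM2int
    exact (integrable_map_measure (measurable_norm.pow_const 2).aestronglyMeasurable
      hX.aemeasurable).mp h
  have EX2 : ∫ ω, ‖X ω‖^2 ∂P = M2 := by
    have h := integral_map (μ := P) (φ := X) hX.aemeasurable
      (f := fun x : EuclideanSpace ℝ (Fin d) => ‖x‖^2)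
      (measurable_norm.pow_const 2).aestronglyMeasurable
    rw [hlawX] at h
    rw [hM2, h]
  -- integrability of coordinate products and vanishing cross term
  have intXZi : ∀ i : Fin d, Integrable (fun ω => X ω i * Z ω i) P := by
    intro i
    refine Integrable.mono' ((hX2.add hZ2).const_mul (1/2)) ?_ ?_
    · exact ((hXmi i).mul (hZmi i)).aestronglyMeasurable
    · refine Filter.Eventually.of_forall fun ω => ?_
      have h1 : (X ω i)^2 ≤ ‖X ω‖^2 := by
        rw [my_norm_sq]
        exact Finset.single_le_sum (f := fun j => (X ω j)^2) (fun j _ => sq_nonneg _)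
          (Finset.mem_univ i)
      have h2 : (Z ω i)^2 ≤ ‖Z ω‖^2 := by
        rw [my_norm_sq]
        exact Finset.single_le_sum (f := fun j => (Z ω j)^2) (fun j _ => sq_nonneg _)
          (Finset.mem_univ i)
      rw [Real.norm_eq_abs]
      rw [abs_mul]
      simp only [Pi.add_apply]
      nlinarith [sq_nonneg (|X ω i| - |Z ω i|), sq_abs (X ω i), sq_abs (Z ω i),
        abs_nonneg (X ω i), abs_nonneg (Z ω i)]
  have EXZi : ∀ i : Fin d, ∫ ω, X ω i * Z ω i ∂P = 0 := by
    intro i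
    have hind : IndepFun (fun ω => X ω i) (fun ω => Z ω i) P :=
      hindep.comp ((measurable_pi_apply i).comp (WithLp.measurable_ofLp _ _)) ((measurable_pi_apply i).comp (WithLp.measurable_ofLp _ _))
    have h := hind.integral_fun_mul_eq_mul_integral (hXmi i).aestronglyMeasurable (hZmi i).aestronglyMeasurable
    have h' : ∫ ω, X ω i * Z ω i ∂P = (∫ ω, X ω i ∂P) * ∫ ω, Z ω i ∂P := h
    rw [h', EZi i, mul_zero]
  have intInner : Integrable (fun ω => (inner ℝ (X ω) (Z ω) : ℝ)) P := by
    have : ∀ ω, (inner ℝ (X ω) (Z ω) : ℝ) = ∑ i, X ω i * Z ω i :=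
      fun ω => my_inner_eq (X ω) (Z ω)
    simp_rw [this]
    exact integrable_finset_sum _ (fun i _ => intXZi i)
  have Einner : ∫ ω, (inner ℝ (X ω) (Z ω) : ℝ) ∂P = 0 := by
    have : ∀ ω, (inner ℝ (X ω) (Z ω) : ℝ) = ∑ i, X ω i * Z ω i :=
      fun ω => my_inner_eq (X ω) (Z ω)
    simp_rw [this]
    rw [integral_finset_sum _ (fun i _ => intXZi i)]
    simp [EXZi]
  -- key expansion
  have key : ∀ A C : ℝ, Integrable (fun ω => ‖A • X ω + C • Z ω‖^2) P ∧
      ∫ ω, ‖A • X ω + C • Z ω‖^2 ∂P = A^2 * M2 + C^2 * d := by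
    intro A C
    have hexp : ∀ ω, ‖A • X ω + C • Z ω‖^2
        = A^2 * ‖X ω‖^2 + (2*A*C) * (inner ℝ (X ω) (Z ω) : ℝ) + C^2 * ‖Z ω‖^2 := by
      intro ω
      rw [norm_add_sq_real, norm_smul, norm_smul, real_inner_smul_left, real_inner_smul_right,
        mul_pow, mul_pow, Real.norm_eq_abs, Real.norm_eq_abs, sq_abs, sq_abs]
      ring
    have I1 : Integrable (fun ω => A^2 * ‖X ω‖^2) P := hX2.const_mul _
    have I2 : Integrable (fun ω => (2*A*C) * (inner ℝ (X ω) (Z ω) : ℝ)) P := intInner.const_mul _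
    have I3 : Integrable (fun ω => C^2 * ‖Z ω‖^2) P := hZ2.const_mul _
    have I12 : Integrable (fun ω => A^2 * ‖X ω‖^2 + (2*A*C) * (inner ℝ (X ω) (Z ω) : ℝ)) P :=
      I1.add I2
    constructor
    · simp_rw [hexp]
      exact I12.add I3
    · simp_rw [hexp]
      rw [show (∫ ω, (A^2 * ‖X ω‖^2 + 2*A*C * (inner ℝ (X ω) (Z ω) : ℝ) + C^2 * ‖Z ω‖^2) ∂P)
          = ∫ ω, ((A^2 * ‖X ω‖^2 + (2*A*C) * (inner ℝ (X ω) (Z ω) : ℝ)) + C^2 * ‖Z ω‖^2) ∂P from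
        integral_congr_ae (Filter.Eventually.of_forall fun ω => by ring)]
      rw [integral_add I12 I3, integral_add I1 I2,
        integral_const_mul, integral_const_mul, integral_const_mul, EX2, EZ2, Einner]
      ring
  -- coupling bound
  have couple : ∀ δ : ℝ, W2sq (pathLaw l) (pathLaw (l+δ)) ≤
      ENNReal.ofReal ((Real.sqrt (l+δ) - Real.sqrt l)^2 * M2
        + ((Real.sqrt (1-(l+δ)) - Real.sqrt (1-l)) * σ)^2 * d) := by
    intro δ
    set A : ℝ := Real.sqrt (l+δ) - Real.sqrt l with hA
    set C : ℝ := (Real.sqrt (1-(l+δ)) - Real.sqrt (1-l)) * σ with hC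
    have hf : Measurable (fun ω => Real.sqrt l • X ω + (Real.sqrt (1-l) * σ) • Z ω) :=
      (hX.const_smul (Real.sqrt l)).add (hZ.const_smul (Real.sqrt (1-l) * σ))
    have hg : Measurable (fun ω => Real.sqrt (l+δ) • X ω + (Real.sqrt (1-(l+δ)) * σ) • Z ω) :=
      (hX.const_smul (Real.sqrt (l+δ))).add (hZ.const_smul (Real.sqrt (1-(l+δ)) * σ))
    set γ : Measure (EuclideanSpace ℝ (Fin d) × EuclideanSpace ℝ (Fin d)) :=
      P.map (fun ω => (Real.sqrt l • X ω + (Real.sqrt (1-l) * σ) • Z ω,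
        Real.sqrt (l+δ) • X ω + (Real.sqrt (1-(l+δ)) * σ) • Z ω)) with hγ
    have hγ1 : γ.map Prod.fst = pathLaw l := by
      rw [hγ, Measure.map_map measurable_fst (hf.prodMk hg), hpath l]
      rfl
    have hγ2 : γ.map Prod.snd = pathLaw (l+δ) := by
      rw [hγ, Measure.map_map measurable_snd (hf.prodMk hg), hpath (l+δ)]
      rfl
    have hle : W2sq (pathLaw l) (pathLaw (l+δ)) ≤ ∫⁻ q, (‖q.1 - q.2‖₊ : ℝ≥0∞) ^ 2 ∂γ := by
      rw [W2sq]
      exact iInf_le_of_le γ (iInf_le_of_le ⟨hγ1, hγ2⟩ le_rfl)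
    refine hle.trans ?_
    have hcostm : Measurable (fun q : EuclideanSpace ℝ (Fin d) × EuclideanSpace ℝ (Fin d) =>
        ((‖q.1 - q.2‖₊ : ℝ≥0∞)) ^ 2) := by
      fun_prop
    rw [hγ, lintegral_map hcostm (hf.prodMk hg)]
    have hpt : ∀ ω, ((‖(Real.sqrt l • X ω + (Real.sqrt (1-l) * σ) • Z ω)
          - (Real.sqrt (l+δ) • X ω + (Real.sqrt (1-(l+δ)) * σ) • Z ω)‖₊ : ℝ≥0∞)) ^ 2
        = ENNReal.ofReal (‖A • X ω + C • Z ω‖^2) := by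
      intro ω
      have hv : (Real.sqrt l • X ω + (Real.sqrt (1-l) * σ) • Z ω)
          - (Real.sqrt (l+δ) • X ω + (Real.sqrt (1-(l+δ)) * σ) • Z ω)
          = -(A • X ω + C • Z ω) := by
        rw [hA, hC]
        module
      rw [hv, ENNReal.ofReal_pow (norm_nonneg _), ofReal_norm, enorm_eq_nnnorm, nnnorm_neg]
    simp_rw [hpt]
    rw [← MeasureTheory.ofReal_integral_eq_lintegral_ofReal (key A C).1
      (Filter.Eventually.of_forall fun ω => sq_nonneg _)]
    rw [(key A C).2]
  -- the limit computation
  set F := nhdsWithin (0:ℝ) {(0:ℝ)}ᶜ with hF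
  set φ : ℝ → ℝ := fun δ => ((Real.sqrt (l+δ) - Real.sqrt l)^2 * M2
      + ((Real.sqrt (1-(l+δ)) - Real.sqrt (1-l)) * σ)^2 * d) / δ^2 with hφdef
  have hbound : ∀ᶠ δ in F, W2sq (pathLaw l) (pathLaw (l + δ)) / ENNReal.ofReal (δ ^ 2)
      ≤ ENNReal.ofReal (φ δ) := by
    refine eventually_mem_nhdsWithin.mono fun δ hδ => ?_
    have hδ0 : δ ≠ 0 := hδ
    have hδ2 : (0:ℝ) < δ^2 := by positivity
    calc W2sq (pathLaw l) (pathLaw (l + δ)) / ENNReal.ofReal (δ ^ 2)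
        ≤ ENNReal.ofReal ((Real.sqrt (l+δ) - Real.sqrt l)^2 * M2
            + ((Real.sqrt (1-(l+δ)) - Real.sqrt (1-l)) * σ)^2 * d) / ENNReal.ofReal (δ ^ 2) :=
          ENNReal.div_le_div_right (couple δ) _
      _ = ENNReal.ofReal (φ δ) := by
          rw [hφdef, ← ENNReal.ofReal_div_of_pos hδ2]
  -- derivative limits
  have hmap1 : Tendsto (fun δ : ℝ => l + δ) F (nhdsWithin l {l}ᶜ) := by
    rw [hF]
    apply Tendsto.inf
    · have hc : Continuous (fun δ : ℝ => l + δ) := continuous_const.add continuous_id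
      have := hc.tendsto (0:ℝ)
      simpa using this
    · refine tendsto_principal_principal.2 fun δ hδ => ?_
      simp only [Set.mem_compl_iff, Set.mem_singleton_iff] at hδ ⊢
      intro h
      exact hδ (by linarith)
  have hmap2 : Tendsto (fun δ : ℝ => 1 - (l + δ)) F (nhdsWithin (1-l) {1-l}ᶜ) := by
    rw [hF]
    apply Tendsto.inf
    · have hc : Continuous (fun δ : ℝ => 1 - (l + δ)) := continuous_const.sub (continuous_const.add continuous_id)
      have := hc.tendsto (0:ℝ)
      simpa using this
    · refine tendsto_principal_principal.2 fun δ hδ => ?_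
      simp only [Set.mem_compl_iff, Set.mem_singleton_iff] at hδ ⊢
      intro h
      exact hδ (by linarith)
  have t1 : Tendsto (fun δ : ℝ => (Real.sqrt (l+δ) - Real.sqrt l)/δ) F
      (nhds (1/(2*Real.sqrt l))) := by
    have hs := hasDerivAt_iff_tendsto_slope.mp (hasDerivAt_sqrt (ne_of_gt hl0))
    have hcomp := hs.comp hmap1
    refine hcomp.congr fun δ => ?_
    simp only [Function.comp_apply, slope_def_field]
    rw [show l + δ - l = δ by ring]
  have t2 : Tendsto (fun δ : ℝ => (Real.sqrt (1-(l+δ)) - Real.sqrt (1-l))/δ) F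
      (nhds (-(1/(2*Real.sqrt (1-l))))) := by
    have h1l : (1:ℝ) - l ≠ 0 := by linarith
    have hs := hasDerivAt_iff_tendsto_slope.mp (hasDerivAt_sqrt h1l)
    have hcomp := (hs.comp hmap2).neg
    refine hcomp.congr fun δ => ?_
    simp only [Function.comp_apply, slope_def_field]
    rw [show (1 - (l + δ)) - (1 - l) = -δ by ring]
    rw [div_neg, neg_neg]
  have hψ : Tendsto (fun δ : ℝ => ((Real.sqrt (l+δ) - Real.sqrt l)/δ)^2 * M2
      + (((Real.sqrt (1-(l+δ)) - Real.sqrt (1-l))/δ) * σ)^2 * d) F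
      (nhds ((1/(2*Real.sqrt l))^2 * M2 + ((-(1/(2*Real.sqrt (1-l)))) * σ)^2 * d)) :=
    (((t1.pow 2).mul_const M2).add (((t2.mul_const σ).pow 2).mul_const (d:ℝ)))
  have hφt : Tendsto φ F
      (nhds ((1/(2*Real.sqrt l))^2 * M2 + ((-(1/(2*Real.sqrt (1-l)))) * σ)^2 * d)) := by
    refine hψ.congr' ?_
    refine eventually_mem_nhdsWithin.mono fun δ hδ => ?_
    have hδ0 : δ ≠ 0 := hδ
    rw [hφdef]
    field_simp
    try ring
  have hLeq : (1/(2*Real.sqrt l))^2 * M2 + ((-(1/(2*Real.sqrt (1-l)))) * σ)^2 * d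
      = M2 / (4 * l) + σ ^ 2 * d / (4 * (1 - l)) := by
    have e1 : (Real.sqrt l)^2 = l := Real.sq_sqrt hl0.le
    have e2 : (Real.sqrt (1-l))^2 = 1 - l := Real.sq_sqrt (by linarith)
    have q1 : (1/(2*Real.sqrt l))^2 = 1/(4*l) := by
      rw [div_pow, mul_pow, e1]
      norm_num
    have q2 : ((-(1/(2*Real.sqrt (1-l)))) * σ)^2 = σ^2/(4*(1-l)) := by
      rw [mul_pow, neg_pow, div_pow, mul_pow, e2]
      ring
    rw [q1, q2]
    ring
  have htends : Tendsto (fun δ => ENNReal.ofReal (φ δ)) F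
      (nhds (ENNReal.ofReal (M2 / (4 * l) + σ ^ 2 * d / (4 * (1 - l))))) := by
    rw [← hLeq]
    exact (ENNReal.continuous_ofReal.continuousAt).tendsto.comp hφt
  refine le_trans (Filter.limsup_le_limsup hbound) (le_of_eq htends.limsup_eq)

end
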